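/- Let (Ω, F, ℙ) be an atomless standard Borel probability space, let u : P₂(ℝ) → ℝ be bounded and measurable, and let ε > 0. For a square-integrable random variable X : Ω → ℝ, define v^ε(X) := inf over all Y ∈ L₂(Ω × [0,1], ℙ ⊗ Leb; ℝ) of [ u(law(Y)) + (1/(2ε))·((ℙ ⊗ Leb)({(ω,s) : X(ω) ≠ Y(ω,s)}))² ]. Then v^ε(X) depends only on the law of X: if X, X' ∈ L₂(Ω; ℝ) have the same distribution, then v^ε(X) = v^ε(X'). -/

import Mathlib

open MeasureTheory ProbabilityTheory Set Filter Topology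
open scoped ENNReal NNReal

namespace VepsAux


/-- CDF-like function. -/
noncomputable def cd (m : Measure ℝ) (t : ℝ) : ℝ := (m (Set.Iic t)).toReal

lemma cd_mono (m : Measure ℝ) [IsProbabilityMeasure m] : Monotone (cd m) := fun a b hab =>
  ENNReal.toReal_mono (measure_ne_top m _) (measure_mono (Set.Iic_subset_Iic.2 hab))

lemma cd_nonneg (m : Measure ℝ) (t : ℝ) : 0 ≤ cd m t := ENNReal.toReal_nonneg

lemma cd_le_one (m : Measure ℝ) [IsProbabilityMeasure m] (t : ℝ) : cd m t ≤ 1 := by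
  have := measure_mono (Set.subset_univ (Set.Iic t)) (μ := m)
  rw [measure_univ] at this
  simpa [cd] using ENNReal.toReal_mono (by simp) this

lemma exists_cd_ge (m : Measure ℝ) [IsProbabilityMeasure m] {s : ℝ} (hs1 : s < 1) :
    ∃ y, s ≤ cd m y := by
  have hmono : Monotone (fun n : ℕ => Set.Iic (n : ℝ)) := fun a b hab =>
    Set.Iic_subset_Iic.2 (by exact_mod_cast hab)
  have hU : ⋃ n : ℕ, Set.Iic ((n : ℝ)) = Set.univ := by
    ext x
    simp only [Set.mem_iUnion, Set.mem_Iic, Set.mem_univ, iff_true]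
    obtain ⟨n, hn⟩ := exists_nat_ge x
    exact ⟨n, hn⟩
  have h := tendsto_measure_iUnion_atTop (μ := m) hmono
  rw [hU, measure_univ] at h
  have hlt : ENNReal.ofReal s < 1 := by
    rcases le_or_gt s 0 with h0 | h0
    · simpa [ENNReal.ofReal_eq_zero.2 h0] using ENNReal.zero_lt_one
    · rw [← ENNReal.ofReal_one]
      exact ENNReal.ofReal_lt_ofReal_iff_of_nonneg h0.le |>.2 hs1
  have := h.eventually_const_lt hlt
  obtain ⟨n, hn⟩ := this.exists
  refine ⟨n, ?_⟩
  have : (ENNReal.ofReal s).toReal ≤ (m (Set.Iic (n : ℝ))).toReal :=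
    ENNReal.toReal_mono (measure_ne_top m _) hn.le
  rcases le_or_gt s 0 with h0 | h0
  · exact h0.trans (cd_nonneg m _)
  · rwa [ENNReal.toReal_ofReal h0.le] at this

lemma exists_cd_lt (m : Measure ℝ) [IsProbabilityMeasure m] {s : ℝ} (hs0 : 0 < s) :
    ∃ y, cd m y < s := by
  have hanti : Antitone (fun n : ℕ => Set.Iic (-(n : ℝ))) := fun a b hab =>
    Set.Iic_subset_Iic.2 (by exact_mod_cast neg_le_neg (by exact_mod_cast hab))
  have hI : ⋂ n : ℕ, Set.Iic (-(n : ℝ)) = (∅ : Set ℝ) := by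
    ext x
    simp only [Set.mem_iInter, Set.mem_Iic, Set.mem_empty_iff_false, iff_false, not_forall, not_le]
    obtain ⟨n, hn⟩ := exists_nat_gt (-x)
    exact ⟨n, by linarith⟩
  have h := tendsto_measure_iInter_atTop (μ := m)
    (fun n => (measurableSet_Iic).nullMeasurableSet) hanti ⟨0, measure_ne_top m _⟩
  rw [hI, measure_empty] at h
  have := h.eventually_lt_const (by simpa using hs0 : (0 : ℝ≥0∞) < ENNReal.ofReal s)
  obtain ⟨n, hn⟩ := this.exists
  refine ⟨-(n : ℝ), ?_⟩
  have := ENNReal.toReal_lt_toReal (measure_ne_top m _) ENNReal.ofReal_ne_top |>.2 hn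
  rwa [ENNReal.toReal_ofReal hs0.le] at this

/-- quantile set -/
def qs (m : Measure ℝ) (s : ℝ) : Set ℝ := {y | s ≤ cd m y}

lemma qs_nonempty (m : Measure ℝ) [IsProbabilityMeasure m] {s : ℝ} (hs1 : s < 1) :
    (qs m s).Nonempty := exists_cd_ge m hs1

lemma qs_bddBelow (m : Measure ℝ) [IsProbabilityMeasure m] {s : ℝ} (hs0 : 0 < s) :
    BddBelow (qs m s) := by
  obtain ⟨y0, hy0⟩ := exists_cd_lt m hs0
  refine ⟨y0, fun z hz => ?_⟩
  by_contra hlt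
  push_neg at hlt
  have : cd m z < s := lt_of_le_of_lt (cd_mono m hlt.le) hy0
  exact absurd hz (by simpa [qs] using not_le.2 this)

lemma le_cd_sInf (m : Measure ℝ) [IsProbabilityMeasure m] {s : ℝ} (hs0 : 0 < s) (hs1 : s < 1) :
    s ≤ cd m (sInf (qs m s)) := by
  set a := sInf (qs m s) with ha
  have hne := qs_nonempty m hs1
  have hbdd := qs_bddBelow m hs0
  have hanti : Antitone (fun n : ℕ => Set.Iic (a + 1 / (n + 1 : ℝ))) := by
    intro i j hij
    refine Set.Iic_subset_Iic.2 ?_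
    have hij' : (i : ℝ) + 1 ≤ (j : ℝ) + 1 := by exact_mod_cast Nat.succ_le_succ hij
    have := one_div_le_one_div_of_le (by positivity : (0:ℝ) < (i:ℝ) + 1) hij'
    linarith
  have hIeq : ⋂ n : ℕ, Set.Iic (a + 1 / (n + 1 : ℝ)) = Set.Iic a := by
    ext x
    simp only [Set.mem_iInter, Set.mem_Iic]
    constructor
    · intro hx
      have htend : Tendsto (fun n : ℕ => a + 1 / (n + 1 : ℝ)) atTop (𝓝 a) := by
        have := (tendsto_one_div_add_atTop_nhds_zero_nat : Tendsto (fun n : ℕ => 1 / ((n : ℝ) + 1)) atTop (𝓝 0))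
        simpa using tendsto_const_nhds.add this
      exact ge_of_tendsto htend (Eventually.of_forall hx)
    · intro hx n
      have : (0 : ℝ) < 1 / (n + 1 : ℝ) := by positivity
      linarith
  have h := tendsto_measure_iInter_atTop (μ := m)
    (fun n => measurableSet_Iic.nullMeasurableSet) hanti ⟨0, measure_ne_top m _⟩
  rw [hIeq] at h
  have hev : ∀ n : ℕ, ENNReal.ofReal s ≤ m (Set.Iic (a + 1 / (n + 1 : ℝ))) := by
    intro n
    have hpos : a < a + 1 / (n + 1 : ℝ) := by
      have : (0 : ℝ) < 1 / (n + 1 : ℝ) := by positivity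
      linarith
    obtain ⟨z, hz, hzlt⟩ := exists_lt_of_csInf_lt hne (lt_of_eq_of_lt ha.symm hpos)
    have hz' : s ≤ cd m z := hz
    have : ENNReal.ofReal s ≤ m (Set.Iic z) := by
      rw [← ENNReal.ofReal_toReal (measure_ne_top m (Set.Iic z))]
      exact ENNReal.ofReal_le_ofReal hz'
    exact this.trans (measure_mono (Set.Iic_subset_Iic.2 hzlt.le))
  have hle : ENNReal.ofReal s ≤ m (Set.Iic a) := ge_of_tendsto h (Eventually.of_forall hev)
  have := ENNReal.toReal_mono (measure_ne_top m _) hle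
  rwa [ENNReal.toReal_ofReal hs0.le] at this

lemma sInf_qs_le_iff (m : Measure ℝ) [IsProbabilityMeasure m] {s : ℝ} (hs0 : 0 < s)
    (hs1 : s < 1) (t : ℝ) : sInf (qs m s) ≤ t ↔ s ≤ cd m t := by
  constructor
  · intro h
    exact (le_cd_sInf m hs0 hs1).trans (cd_mono m h)
  · intro h
    exact csInf_le (qs_bddBelow m hs0) h









noncomputable def Leb01 : Measure ℝ := volume.restrict (Set.Icc (0:ℝ) 1)

instance : IsProbabilityMeasure Leb01 :=
  ⟨by simp [Leb01, Measure.restrict_apply, Real.volume_Icc]⟩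

/-- the randomized quantile function of a kernel -/
noncomputable def qf (κ : Kernel ℝ ℝ) (p : ℝ × ℝ) : ℝ :=
  if 0 < p.2 ∧ p.2 < 1 then sInf (qs (κ p.1) p.2) else 0

lemma measurable_qf (κ : Kernel ℝ ℝ) [IsMarkovKernel κ] : Measurable (qf κ) := by
  apply measurable_of_Iic
  intro t
  have hset : qf κ ⁻¹' Set.Iic t =
      ({p : ℝ × ℝ | 0 < p.2 ∧ p.2 < 1} ∩ {p : ℝ × ℝ | p.2 ≤ cd (κ p.1) t}) ∪
      ({p : ℝ × ℝ | 0 < p.2 ∧ p.2 < 1}ᶜ ∩ {p : ℝ × ℝ | (0:ℝ) ≤ t}) := by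
    ext p
    simp only [Set.mem_preimage, Set.mem_Iic, Set.mem_union, Set.mem_inter_iff,
      Set.mem_compl_iff, Set.mem_setOf_eq, qf]
    by_cases hB : 0 < p.2 ∧ p.2 < 1
    · simp only [hB, if_true, true_and, not_true_eq_false, false_and, or_false]
      exact sInf_qs_le_iff (κ p.1) hB.1 hB.2 t
    · simp only [hB, if_false, false_and, not_false_eq_true, true_and, false_or]
  rw [hset]
  have h1 : MeasurableSet {p : ℝ × ℝ | 0 < p.2 ∧ p.2 < 1} := by
    have : {p : ℝ × ℝ | 0 < p.2 ∧ p.2 < 1} = Prod.snd ⁻¹' Set.Ioo 0 1 := rfl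
    rw [this]
    exact measurable_snd measurableSet_Ioo
  have hcd : Measurable (fun p : ℝ × ℝ => cd (κ p.1) t) :=
    ((κ.measurable_coe measurableSet_Iic).comp measurable_fst).ennreal_toReal
  have h2 : MeasurableSet {p : ℝ × ℝ | p.2 ≤ cd (κ p.1) t} :=
    measurableSet_le measurable_snd hcd
  have h3 : MeasurableSet {p : ℝ × ℝ | (0:ℝ) ≤ t} := MeasurableSet.const _
  exact (h1.inter h2).union (h1.compl.inter h3)

lemma map_qf (κ : Kernel ℝ ℝ) [IsMarkovKernel κ] (x : ℝ) :
    Leb01.map (fun s => qf κ (x, s)) = κ x := by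
  have hmeas : Measurable (fun s => qf κ (x, s)) :=
    (measurable_qf κ).comp measurable_prodMk_left
  haveI : IsProbabilityMeasure (Leb01.map (fun s => qf κ (x, s))) :=
    Measure.isProbabilityMeasure_map hmeas.aemeasurable
  refine Measure.ext_of_Iic _ _ (fun t => ?_)
  rw [Measure.map_apply hmeas measurableSet_Iic]
  have hA : MeasurableSet ((fun s => qf κ (x, s)) ⁻¹' Set.Iic t) :=
    hmeas measurableSet_Iic
  rw [Leb01, Measure.restrict_apply hA]
  set A := (fun s => qf κ (x, s)) ⁻¹' Set.Iic t with hAdef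
  have hsub1 : A ∩ Set.Icc 0 1 ⊆ (A ∩ Set.Ioo 0 1) ∪ ({0, 1} : Set ℝ) := by
    rintro s ⟨hsA, hs0, hs1⟩
    rcases eq_or_lt_of_le hs0 with h | h
    · exact Or.inr (Or.inl h.symm)
    rcases eq_or_lt_of_le hs1 with h' | h'
    · exact Or.inr (Or.inr h')
    exact Or.inl ⟨hsA, h, h'⟩
  have hnull : volume ({0, 1} : Set ℝ) = 0 := by
    rw [Set.insert_eq]
    exact measure_union_null Real.volume_singleton Real.volume_singleton
  have heq : volume (A ∩ Set.Icc 0 1) = volume (A ∩ Set.Ioo 0 1) := by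
    apply le_antisymm
    · calc volume (A ∩ Set.Icc 0 1) ≤ volume ((A ∩ Set.Ioo 0 1) ∪ ({0, 1} : Set ℝ)) :=
            measure_mono hsub1
        _ ≤ volume (A ∩ Set.Ioo 0 1) + volume ({0, 1} : Set ℝ) := measure_union_le _ _
        _ = volume (A ∩ Set.Ioo 0 1) := by rw [hnull, add_zero]
    · exact measure_mono (Set.inter_subset_inter_right _ Set.Ioo_subset_Icc_self)
  rw [heq]
  have hAIoo : A ∩ Set.Ioo 0 1 = Set.Iic (cd (κ x) t) ∩ Set.Ioo 0 1 := by
    ext s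
    simp only [hAdef, Set.mem_inter_iff, Set.mem_preimage, Set.mem_Iic, Set.mem_Ioo]
    constructor
    · rintro ⟨hqf, hs0, hs1⟩
      refine ⟨?_, hs0, hs1⟩
      rw [qf, if_pos ⟨hs0, hs1⟩] at hqf
      exact (sInf_qs_le_iff (κ x) hs0 hs1 t).1 hqf
    · rintro ⟨hcdle, hs0, hs1⟩
      refine ⟨?_, hs0, hs1⟩
      rw [qf, if_pos ⟨hs0, hs1⟩]
      exact (sInf_qs_le_iff (κ x) hs0 hs1 t).2 hcdle
  rw [hAIoo]
  have h0 : (0:ℝ) ≤ cd (κ x) t := cd_nonneg _ _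
  have h1 : cd (κ x) t ≤ 1 := cd_le_one _ _
  have hvol : volume (Set.Iic (cd (κ x) t) ∩ Set.Ioo 0 1) = ENNReal.ofReal (cd (κ x) t) := by
    rcases eq_or_lt_of_le h0 with hF0 | hF0
    · have : Set.Iic (cd (κ x) t) ∩ Set.Ioo 0 1 = (∅ : Set ℝ) := by
        ext s
        simp only [Set.mem_inter_iff, Set.mem_Iic, Set.mem_Ioo, Set.mem_empty_iff_false,
          iff_false, not_and]
        intro hle hs0
        linarith [hF0]
      rw [this]
      simp [← hF0]
    rcases eq_or_lt_of_le h1 with hF1 | hF1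
    · have : Set.Iic (cd (κ x) t) ∩ Set.Ioo 0 1 = Set.Ioo (0:ℝ) 1 := by
        ext s
        simp only [Set.mem_inter_iff, Set.mem_Iic, Set.mem_Ioo]
        constructor
        · rintro ⟨_, h⟩; exact h
        · rintro ⟨hs0, hs1⟩; exact ⟨by linarith [hF1], hs0, hs1⟩
      rw [this, Real.volume_Ioo, hF1]
      norm_num
    · have : Set.Iic (cd (κ x) t) ∩ Set.Ioo 0 1 = Set.Ioc (0:ℝ) (cd (κ x) t) := by
        ext s
        simp only [Set.mem_inter_iff, Set.mem_Iic, Set.mem_Ioo, Set.mem_Ioc]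
        constructor
        · rintro ⟨hle, hs0, _⟩; exact ⟨hs0, hle⟩
        · rintro ⟨hs0, hle⟩; exact ⟨hle, hs0, lt_of_le_of_lt hle hF1⟩
      rw [this, Real.volume_Ioc]
      norm_num
  rw [hvol, cd, ENNReal.ofReal_toReal (measure_ne_top _ _)]










lemma map_qf_joint (κ : Kernel ℝ ℝ) [IsMarkovKernel κ] (ν : Measure ℝ) [IsProbabilityMeasure ν] :
    (ν.prod Leb01).map (fun q : ℝ × ℝ => (q.1, qf κ q)) = ν ⊗ₘ κ := by
  have hqf := measurable_qf κ
  have hH : Measurable (fun q : ℝ × ℝ => (q.1, qf κ q)) := measurable_fst.prodMk hqf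
  refine Measure.ext (fun S hS => ?_)
  rw [Measure.map_apply hH hS, Measure.compProd_apply hS,
    Measure.prod_apply (hH hS)]
  refine lintegral_congr (fun x => ?_)
  have hpre : Prod.mk x ⁻¹' ((fun q : ℝ × ℝ => (q.1, qf κ q)) ⁻¹' S)
      = (fun s => qf κ (x, s)) ⁻¹' (Prod.mk x ⁻¹' S) := rfl
  have hm : Measurable (fun s => qf κ (x, s)) := hqf.comp measurable_prodMk_left
  rw [hpre, ← Measure.map_apply hm (measurable_prodMk_left hS), map_qf κ x]

variable {Ω : Type*} [MeasurableSpace Ω] [StandardBorelSpace Ω]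

lemma transfer (P : Measure Ω) [IsProbabilityMeasure P]
    (X X' : Ω → ℝ) (hX : Measurable X) (hX' : Measurable X')
    (hlaw : P.map X = P.map X') (Y : Ω × ℝ → ℝ) (hYm : Measurable Y) :
    ∃ Z : Ω × ℝ → ℝ, Measurable Z ∧
      (P.prod Leb01).map (fun p : Ω × ℝ => (X p.1, Z p))
        = (P.prod Leb01).map (fun p : Ω × ℝ => (X' p.1, Y p)) := by
  set Q := P.prod Leb01 with hQ
  have hpair' : Measurable (fun p : Ω × ℝ => (X' p.1, Y p)) :=
    (hX'.comp measurable_fst).prodMk hYm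
  set μ := Q.map (fun p : Ω × ℝ => (X' p.1, Y p)) with hμ
  haveI : IsProbabilityMeasure μ := Measure.isProbabilityMeasure_map hpair'.aemeasurable
  have hfst : μ.fst = P.map X := by
    rw [hμ, Measure.fst, Measure.map_map measurable_fst hpair']
    have : (Prod.fst ∘ fun p : Ω × ℝ => (X' p.1, Y p)) = X' ∘ Prod.fst := rfl
    rw [this, ← Measure.map_map hX' measurable_fst, hQ, Measure.map_fst_prod]
    simp [hlaw]
  refine ⟨fun p => qf μ.condKernel (X p.1, p.2), ?_, ?_⟩
  · exact (measurable_qf _).comp ((hX.comp measurable_fst).prodMk measurable_snd)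
  · have hcomp : (fun p : Ω × ℝ => (X p.1, qf μ.condKernel (X p.1, p.2)))
        = (fun q : ℝ × ℝ => (q.1, qf μ.condKernel q)) ∘ (Prod.map X id) := rfl
    rw [hcomp, ← Measure.map_map (measurable_fst.prodMk (measurable_qf _))
      (hX.prodMap measurable_id)]
    have h2 : Q.map (Prod.map X id) = (P.map X).prod Leb01 := by
      rw [hQ, ← Measure.map_prod_map _ _ hX measurable_id, Measure.map_id]
    haveI : IsProbabilityMeasure (P.map X) := Measure.isProbabilityMeasure_map hX.aemeasurable
    rw [h2, map_qf_joint μ.condKernel (P.map X), ← hfst]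
    exact μ.disintegrate μ.condKernel


end VepsAux

open VepsAux

/-- The penalized infimum `v^ε(X)` from the inf-convolution approximation:
`v^ε(X) = inf_{Y ∈ L₂(Ω×[0,1])} [ u(law Y) + (1/(2ε)) ((ℙ⊗Leb)(X ≠ Y))² ]`. -/
noncomputable def veps {Ω : Type*} [MeasurableSpace Ω] (P : Measure Ω)
    (u : Measure ℝ → ℝ) (ε : ℝ) (X : Ω → ℝ) : ℝ :=
  ⨅ Y : {Y : Ω × ℝ → ℝ // MemLp Y 2 (P.prod (volume.restrict (Set.Icc (0:ℝ) 1)))},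
    u ((P.prod (volume.restrict (Set.Icc (0:ℝ) 1))).map Y.1) +
      (1 / (2 * ε)) *
        ((P.prod (volume.restrict (Set.Icc (0:ℝ) 1))) {p : Ω × ℝ | X p.1 ≠ Y.1 p}).toReal ^ 2

theorem veps_le {Ω : Type*} [MeasurableSpace Ω] [StandardBorelSpace Ω]
    (P : Measure Ω) [IsProbabilityMeasure P]
    (u : Measure ℝ → ℝ) (hub : ∃ M, ∀ μ, |u μ| ≤ M)
    (ε : ℝ) (hε : 0 < ε)
    (X X' : Ω → ℝ) (hX : Measurable X) (hX' : Measurable X')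
    (hlaw : P.map X = P.map X') :
    veps P u ε X ≤ veps P u ε X' := by
  classical
  obtain ⟨M, hM⟩ := hub
  set Q := P.prod Leb01 with hQdef
  have hQeq : P.prod (volume.restrict (Set.Icc (0:ℝ) 1)) = Q := rfl
  haveI : IsProbabilityMeasure Q := by infer_instance
  -- lower bound
  have hbdd : ∀ (W : Ω → ℝ)
      (Y : {Y : Ω × ℝ → ℝ // MemLp Y 2 (P.prod (volume.restrict (Set.Icc (0:ℝ) 1)))}),
      -M ≤ u ((P.prod (volume.restrict (Set.Icc (0:ℝ) 1))).map Y.1) + (1 / (2 * ε)) *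
        ((P.prod (volume.restrict (Set.Icc (0:ℝ) 1))) {p : Ω × ℝ | W p.1 ≠ Y.1 p}).toReal ^ 2 := by
    intro W Y
    have h1 : -M ≤ u ((P.prod (volume.restrict (Set.Icc (0:ℝ) 1))).map Y.1) :=
      (abs_le.1 (hM _)).1
    have h2 : 0 ≤ (1 / (2 * ε)) *
        ((P.prod (volume.restrict (Set.Icc (0:ℝ) 1))) {p : Ω × ℝ | W p.1 ≠ Y.1 p}).toReal ^ 2 :=
      mul_nonneg (by positivity) (sq_nonneg _)
    linarith
  have hbb : BddBelow (Set.range fun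
      Y : {Y : Ω × ℝ → ℝ // MemLp Y 2 (P.prod (volume.restrict (Set.Icc (0:ℝ) 1)))} =>
      u ((P.prod (volume.restrict (Set.Icc (0:ℝ) 1))).map Y.1) + (1 / (2 * ε)) *
        ((P.prod (volume.restrict (Set.Icc (0:ℝ) 1))) {p : Ω × ℝ | X p.1 ≠ Y.1 p}).toReal ^ 2) :=
    ⟨-M, by rintro _ ⟨Y, rfl⟩; exact hbdd X Y⟩
  haveI : Nonempty {Y : Ω × ℝ → ℝ // MemLp Y 2 (P.prod (volume.restrict (Set.Icc (0:ℝ) 1)))} :=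
    ⟨⟨fun _ => (0:ℝ), memLp_const 0⟩⟩
  rw [veps, veps]
  refine le_ciInf (fun Y => ?_)
  -- replace Y by a measurable representative
  obtain ⟨Y, hY2⟩ := Y
  have hYae := hY2.aestronglyMeasurable
  set Ym := hYae.mk Y with hYmdef
  have hYmm : Measurable Ym := hYae.stronglyMeasurable_mk.measurable
  have hae : Y =ᵐ[P.prod (volume.restrict (Set.Icc (0:ℝ) 1))] Ym := hYae.ae_eq_mk
  have hmapeq : (P.prod (volume.restrict (Set.Icc (0:ℝ) 1))).map Y
      = (P.prod (volume.restrict (Set.Icc (0:ℝ) 1))).map Ym := Measure.map_congr hae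
  have hseteq : (P.prod (volume.restrict (Set.Icc (0:ℝ) 1))) {p : Ω × ℝ | X' p.1 ≠ Y p}
      = (P.prod (volume.restrict (Set.Icc (0:ℝ) 1))) {p : Ω × ℝ | X' p.1 ≠ Ym p} := by
    apply measure_congr
    filter_upwards [hae] with p hp
    simp only [eq_iff_iff]
    show (X' p.1 ≠ Y p) ↔ (X' p.1 ≠ Ym p)
    rw [hp]
  -- transfer
  obtain ⟨Z, hZm, hZlaw⟩ := transfer P X X' hX hX' hlaw Ym hYmm
  have hpairX : Measurable (fun p : Ω × ℝ => (X p.1, Z p)) :=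
    (hX.comp measurable_fst).prodMk hZm
  have hpairX' : Measurable (fun p : Ω × ℝ => (X' p.1, Ym p)) :=
    (hX'.comp measurable_fst).prodMk hYmm
  -- same law for Z and Ym
  have hmapZ : Q.map Z = Q.map Ym := by
    have h1 : Q.map Z = (Q.map (fun p : Ω × ℝ => (X p.1, Z p))).map Prod.snd := by
      rw [Measure.map_map measurable_snd hpairX]; rfl
    have h2 : Q.map Ym = (Q.map (fun p : Ω × ℝ => (X' p.1, Ym p))).map Prod.snd := by
      rw [Measure.map_map measurable_snd hpairX']; rfl
    rw [h1, h2, hZlaw]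
  -- same mismatch measure
  have hD : MeasurableSet {q : ℝ × ℝ | q.1 ≠ q.2} :=
    (measurableSet_eq_fun measurable_fst measurable_snd).compl
  have hmismatch : Q {p : Ω × ℝ | X p.1 ≠ Z p} = Q {p : Ω × ℝ | X' p.1 ≠ Ym p} := by
    have h1 : Q {p : Ω × ℝ | X p.1 ≠ Z p}
        = (Q.map (fun p : Ω × ℝ => (X p.1, Z p))) {q : ℝ × ℝ | q.1 ≠ q.2} := by
      rw [Measure.map_apply hpairX hD]; rfl
    have h2 : Q {p : Ω × ℝ | X' p.1 ≠ Ym p}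
        = (Q.map (fun p : Ω × ℝ => (X' p.1, Ym p))) {q : ℝ × ℝ | q.1 ≠ q.2} := by
      rw [Measure.map_apply hpairX' hD]; rfl
    rw [h1, h2, hZlaw]
  -- Z is MemLp
  have hYm2 : MemLp Ym 2 Q := hY2.ae_eq hae
  have hZ2 : MemLp Z 2 Q := by
    have hid : MemLp (id : ℝ → ℝ) 2 (Q.map Ym) :=
      (memLp_map_measure_iff aestronglyMeasurable_id hYmm.aemeasurable).2 hYm2
    rw [← hmapZ] at hid
    exact (memLp_map_measure_iff aestronglyMeasurable_id hZm.aemeasurable).1 hid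
  refine le_trans (ciInf_le hbb ⟨Z, hZ2⟩) ?_
  simp only
  rw [hmapeq, hseteq]
  rw [show (P.prod (volume.restrict (Set.Icc (0:ℝ) 1))).map Z = Q.map Z from rfl, hmapZ]
  rw [show (P.prod (volume.restrict (Set.Icc (0:ℝ) 1))) {p : Ω × ℝ | X p.1 ≠ Z p}
    = Q {p : Ω × ℝ | X p.1 ≠ Z p} from rfl, hmismatch]
  exact le_rfl

theorem stmt2 {Ω : Type*} [MeasurableSpace Ω] [StandardBorelSpace Ω]
    (P : Measure Ω) [IsProbabilityMeasure P] [NullSingletonClass P]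
    (u : Measure ℝ → ℝ) (hum : Measurable u) (hub : ∃ M, ∀ μ, |u μ| ≤ M)
    (ε : ℝ) (hε : 0 < ε)
    (X X' : Ω → ℝ) (hX : Measurable X) (hX' : Measurable X')
    (hX2 : MemLp X 2 P) (hX'2 : MemLp X' 2 P)
    (hlaw : P.map X = P.map X') :
    veps P u ε X = veps P u ε X' :=
  le_antisymm (veps_le P u hub ε hε X X' hX hX' hlaw)
    (veps_le P u hub ε hε X' X hX' hX hlaw.symm)
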